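/- Let n ≥ 3 and let W = M[R_n, R_{n-1}, C_n] be the subalgebra of M_n(K) consisting of all matrices whose n-th row, (n-1)-th row, and n-th column are zero. Then W is a nonunital intersection, i.e., W is the intersection of two unital subalgebras of M_n(K) but W itself has no unity, and the dimension of W over K is (n-1)(n-2). -/

import Mathlib

open Matrix


/-- For `n ≥ 3`, `W = M[Rₙ, Rₙ₋₁, Cₙ]` (matrices whose `n`-th row,
`(n-1)`-th row and `n`-th column vanish) is a nonunital intersection: it is the
intersection of two unital (non-unital-type) subalgebras of `Mₙ(K)`, it has no
unity itself, and its dimension over `K` is `(n-1)(n-2)`. -/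
theorem stmt0 (K : Type*) [Field K] [CharZero K] (n : ℕ) (hn : 3 ≤ n)
    (W : NonUnitalSubalgebra K (Matrix (Fin n) (Fin n) K))
    (hW : ∀ A : Matrix (Fin n) (Fin n) K,
      A ∈ W ↔ (∀ j, A ⟨n - 1, by omega⟩ j = 0) ∧ (∀ j, A ⟨n - 2, by omega⟩ j = 0) ∧
        (∀ i, A i ⟨n - 1, by omega⟩ = 0)) :
    (∃ U V : NonUnitalSubalgebra K (Matrix (Fin n) (Fin n) K),
        (∃ e ∈ U, ∀ u ∈ U, e * u = u ∧ u * e = u) ∧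
        (∃ e ∈ V, ∀ u ∈ V, e * u = u ∧ u * e = u) ∧
        W = U ⊓ V) ∧
    (¬ ∃ e ∈ W, ∀ u ∈ W, e * u = u ∧ u * e = u) ∧
    Module.finrank K W = (n - 1) * (n - 2) := by
  have ha : n - 1 < n := by omega
  have hb : n - 2 < n := by omega
  set a : Fin n := ⟨n-1, ha⟩ with ha'
  set b : Fin n := ⟨n-2, hb⟩ with hb'
  have hab : a ≠ b := by simp only [a, b, ne_eq, Fin.mk.injEq]; omega
  have hW' : ∀ A : Matrix (Fin n) (Fin n) K,
      A ∈ W ↔ (∀ j, A a j = 0) ∧ (∀ j, A b j = 0) ∧ (∀ i, A i a = 0) := hW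
  -- U : row a = 0, column a = 0
  let U : NonUnitalSubalgebra K (Matrix (Fin n) (Fin n) K) :=
  { carrier := {A | (∀ j, A a j = 0) ∧ (∀ i, A i a = 0)}
    add_mem' := fun hA hB => ⟨fun j => by simp [Matrix.add_apply, hA.1 j, hB.1 j],
      fun i => by simp [Matrix.add_apply, hA.2 i, hB.2 i]⟩
    zero_mem' := ⟨fun j => rfl, fun i => rfl⟩
    mul_mem' := fun {A B} hA hB => ⟨fun j => by
        rw [Matrix.mul_apply]; exact Finset.sum_eq_zero fun k _ => by rw [hA.1 k, zero_mul],
      fun i => by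
        rw [Matrix.mul_apply]; exact Finset.sum_eq_zero fun k _ => by rw [hB.2 k, mul_zero]⟩
    smul_mem' := fun c {A} hA => ⟨fun j => by simp [Matrix.smul_apply, hA.1 j],
      fun i => by simp [Matrix.smul_apply, hA.2 i]⟩ }
  -- V : column a = 0, row a = row b
  let V : NonUnitalSubalgebra K (Matrix (Fin n) (Fin n) K) :=
  { carrier := {A | (∀ i, A i a = 0) ∧ (∀ j, A a j = A b j)}
    add_mem' := fun hA hB => ⟨fun i => by simp [Matrix.add_apply, hA.1 i, hB.1 i],
      fun j => by simp [Matrix.add_apply, hA.2 j, hB.2 j]⟩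
    zero_mem' := ⟨fun i => rfl, fun j => rfl⟩
    mul_mem' := fun {A B} hA hB => ⟨fun i => by
        rw [Matrix.mul_apply]; exact Finset.sum_eq_zero fun k _ => by rw [hB.1 k, mul_zero],
      fun j => by
        rw [Matrix.mul_apply, Matrix.mul_apply]
        exact Finset.sum_congr rfl fun k _ => by rw [hA.2 k]⟩
    smul_mem' := fun c {A} hA => ⟨fun i => by simp [Matrix.smul_apply, hA.1 i],
      fun j => by simp [Matrix.smul_apply, hA.2 j]⟩ }
  have hUmem : ∀ A : Matrix (Fin n) (Fin n) K,
      A ∈ U ↔ (∀ j, A a j = 0) ∧ (∀ i, A i a = 0) := fun A => Iff.rfl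
  have hVmem : ∀ A : Matrix (Fin n) (Fin n) K,
      A ∈ V ↔ (∀ i, A i a = 0) ∧ (∀ j, A a j = A b j) := fun A => Iff.rfl
  refine ⟨⟨U, V, ?_, ?_, ?_⟩, ?_, ?_⟩
  · -- U is unital with e = 1 - E_aa
    refine ⟨1 - single a a 1, ?_, ?_⟩
    · rw [hUmem]
      constructor
      · intro j
        by_cases h : j = a <;>
          simp [Matrix.sub_apply, Matrix.one_apply, Matrix.single, h]
      · intro i
        by_cases h : i = a <;>
          simp [Matrix.sub_apply, Matrix.one_apply, Matrix.single, h, eq_comm]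
    · intro u hu
      rw [hUmem] at hu
      constructor
      · ext i j
        rw [sub_mul, one_mul, Matrix.sub_apply]
        by_cases h : i = a
        · subst h; rw [single_mul_apply_same, one_mul, hu.1 j]; ring
        · rw [single_mul_apply_of_ne (h := h), sub_zero]
      · ext i j
        rw [mul_sub, mul_one, Matrix.sub_apply]
        by_cases h : j = a
        · subst h; rw [mul_single_apply_same, mul_one, hu.2 i]; ring
        · rw [mul_single_apply_of_ne (hbj := h), sub_zero]
  · -- V is unital with f = 1 + E_ab - E_aa
    refine ⟨1 + single a b 1 - single a a 1, ?_, ?_⟩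
    · rw [hVmem]
      constructor
      · intro i
        by_cases h : i = a <;>
          simp [Matrix.sub_apply, Matrix.add_apply, Matrix.one_apply,
            Matrix.single, h, hab, hab.symm, eq_comm]
      · intro j
        by_cases h1 : j = a
        · subst h1
          simp [Matrix.sub_apply, Matrix.add_apply, Matrix.one_apply,
            Matrix.single, hab, hab.symm]
        · by_cases h2 : j = b <;>
            simp [Matrix.sub_apply, Matrix.add_apply, Matrix.one_apply,
              Matrix.single, h1, h2, hab, hab.symm, eq_comm]
    · intro u hu
      rw [hVmem] at hu
      constructor
      · ext i j
        rw [sub_mul, add_mul, one_mul, Matrix.sub_apply, Matrix.add_apply]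
        by_cases h : i = a
        · subst h
          rw [single_mul_apply_same, single_mul_apply_same,
            one_mul, one_mul, hu.2 j]; ring
        · rw [single_mul_apply_of_ne (h := h),
            single_mul_apply_of_ne (h := h)]; ring
      · ext i j
        rw [mul_sub, mul_add, mul_one, Matrix.sub_apply, Matrix.add_apply]
        by_cases h1 : j = b
        · subst h1
          rw [mul_single_apply_same,
            mul_single_apply_of_ne (hbj := hab.symm), mul_one, hu.1 i]; ring
        · by_cases h2 : j = a
          · subst h2
            rw [mul_single_apply_same,
              mul_single_apply_of_ne (hbj := h1), mul_one, hu.1 i]; ring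
          · rw [mul_single_apply_of_ne (hbj := h1),
              mul_single_apply_of_ne (hbj := h2)]; ring
  · -- W = U ⊓ V
    ext A
    rw [NonUnitalAlgebra.mem_inf, hW' A, hUmem, hVmem]
    constructor
    · rintro ⟨h1, h2, h3⟩
      exact ⟨⟨h1, h3⟩, h3, fun j => by rw [h1 j, h2 j]⟩
    · rintro ⟨⟨h1, h3⟩, _, h4⟩
      exact ⟨h1, fun j => by rw [← h4 j, h1 j], h3⟩
  · -- W has no unit
    rintro ⟨e, heW, hprop⟩
    have hz : (0 : ℕ) < n := by omega
    set z : Fin n := ⟨0, hz⟩ with hz'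
    have hza : z ≠ a := by simp only [z, a, ne_eq, Fin.mk.injEq]; omega
    have hzb : z ≠ b := by simp only [z, b, ne_eq, Fin.mk.injEq]; omega
    have huW : single z b (1:K) ∈ W := by
      rw [hW']
      refine ⟨fun j => ?_, fun j => ?_, fun i => ?_⟩
      · exact single_apply_of_ne _ _ _ _ _ (by tauto)
      · exact single_apply_of_ne _ _ _ _ _ (by tauto)
      · exact single_apply_of_ne _ _ _ _ _ (by tauto)
    have h1 := (hprop _ huW).2
    have h2 : (single z b (1:K) * e) z b = e b b := by
      rw [single_mul_apply_same, one_mul]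
    rw [h1] at h2
    have h3 : single z b (1:K) z b = 1 := single_apply_same _ _ _
    have h4 : e b b = 0 := ((hW' e).1 heW).2.1 b
    rw [h3, h4] at h2
    exact one_ne_zero h2
  · -- dimension
    have h2n : n - 2 ≤ n := by omega
    have h1n : n - 1 ≤ n := by omega
    let φ : W ≃ₗ[K] Matrix (Fin (n-2)) (Fin (n-1)) K :=
    { toFun := fun A => Matrix.of fun i j =>
        (A : Matrix (Fin n) (Fin n) K) ⟨i.1, by omega⟩ ⟨j.1, by omega⟩
      map_add' := fun A B => by ext i j; simp
      map_smul' := fun c A => by ext i j; simp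
      invFun := fun M => ⟨Matrix.of fun i j =>
          if h : i.1 < n-2 ∧ j.1 < n-1 then M ⟨i.1, h.1⟩ ⟨j.1, h.2⟩ else 0, by
        rw [hW']
        refine ⟨fun j => ?_, fun j => ?_, fun i => ?_⟩
        · exact dif_neg (by show ¬(n - 1 < n - 2 ∧ (j : ℕ) < n - 1); omega)
        · exact dif_neg (by show ¬(n - 2 < n - 2 ∧ (j : ℕ) < n - 1); omega)
        · exact dif_neg (by show ¬((i : ℕ) < n - 2 ∧ n - 1 < n - 1); omega)⟩
      left_inv := fun A => by
        apply Subtype.ext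
        ext i j
        show dite _ _ _ = _
        by_cases h : i.1 < n-2 ∧ j.1 < n-1
        · rw [dif_pos h]; rfl
        · rw [dif_neg h]
          obtain ⟨h1, h2, h3⟩ := (hW' _).1 A.2
          have : i.1 = n - 2 ∨ i.1 = n - 1 ∨ j.1 = n - 1 := by
            have := i.2; have := j.2; omega
          rcases this with h' | h' | h'
          · have : i = b := by apply Fin.ext; exact h'
            rw [this]; exact (h2 j).symm
          · have : i = a := by apply Fin.ext; exact h'
            rw [this]; exact (h1 j).symm
          · have : j = a := by apply Fin.ext; exact h'
            rw [this]; exact (h3 i).symm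
      right_inv := fun M => by
        ext i j
        show dite _ _ _ = _
        rw [dif_pos ⟨i.2, j.2⟩] }
    rw [φ.finrank_eq, Module.finrank_matrix]
    simp [Fintype.card_fin, Nat.mul_comm]
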